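/- Let d = n² + 1 be a squarefree integer with d ≡ 1 (mod 8) and d ≠ 17. Then the ideal [2, (1+√d)/2] of the ring of integers Z[(1+√d)/2] of Q(√d) is not a principal ideal. -/

import Mathlib

open Polynomial

private lemma sq_ne_eight (T : ℤ) : T ^ 2 ≠ 8 := by
  intro h
  have h1 : T.natAbs ^ 2 = 8 := by
    have h2 : ((T.natAbs : ℤ)) ^ 2 = T ^ 2 := Int.natAbs_pow_two T
    rw [h] at h2; exact_mod_cast h2
  have h2 : T.natAbs ≤ 8 := by nlinarith
  set a := T.natAbs
  interval_cases a <;> omega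

private lemma no_pell (n : ℕ) (hn : 8 ≤ n) : ∀ y : ℕ, 0 < y → ∀ x e : ℤ, (e = 1 ∨ e = -1) →
    x ^ 2 - ((n : ℤ) ^ 2 + 1) * (y : ℤ) ^ 2 = 8 * e → False := by
  intro y
  induction y using Nat.strong_induction_on with
  | _ y ih =>
    intro hy x e he heq
    have hN8 : (8 : ℤ) ≤ (n : ℤ) := by exact_mod_cast hn
    set N : ℤ := (n : ℤ) with hN
    set Y : ℤ := (y : ℤ) with hYdef
    have hY1 : 1 ≤ Y := by rw [hYdef]; exact_mod_cast hy
    set X : ℤ := |x| with hX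
    have hX0 : 0 ≤ X := abs_nonneg x
    have habs : X ^ 2 - (N ^ 2 + 1) * Y ^ 2 = 8 * e := by rw [hX, sq_abs]; exact heq
    by_cases hbase : e = -1 ∧ Y ≤ 2
    · obtain ⟨rfl, hY2⟩ := hbase
      have hY12 : Y = 1 ∨ Y = 2 := by omega
      rcases hY12 with h | h <;> rw [h] at habs
      · have h1 : X ^ 2 = N ^ 2 - 7 := by linarith
        have h2 : X < N := by nlinarith
        have h3 : X ^ 2 ≤ (N - 1) ^ 2 := by nlinarith
        nlinarith
      · have h1 : X ^ 2 = 4 * N ^ 2 - 4 := by linarith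
        have h2 : X < 2 * N := by nlinarith
        have h3 : X ^ 2 ≤ (2 * N - 1) ^ 2 := by nlinarith
        nlinarith
    · have hcase : e = 1 ∨ (e = -1 ∧ 3 ≤ Y) := by
        rcases he with h | h
        · exact Or.inl h
        · exact Or.inr ⟨h, by omega⟩
      have hbig : (N * Y) ^ 2 < X ^ 2 := by
        rcases hcase with rfl | ⟨rfl, h3⟩ <;> nlinarith
      have hXgt : N * Y < X := by
        nlinarith [mul_nonneg (by linarith : (0:ℤ) ≤ N) (by linarith : (0:ℤ) ≤ Y)]
      set t : ℤ := X - N * Y with ht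
      have ht1 : 1 ≤ t := by omega
      have heq2 : t ^ 2 + 2 * N * Y * t - Y ^ 2 = 8 * e := by
        have hXt : X = N * Y + t := by omega
        rw [hXt] at habs; linear_combination habs
      have he8 : 8 * e ≤ 8 := by rcases he with rfl | rfl <;> norm_num
      have hNY : (0:ℤ) ≤ 2 * N * Y := by nlinarith
      have hYY : (1:ℤ) ≤ Y * Y := by nlinarith
      have hNY2 : (16:ℤ) ≤ 2 * N * (Y * Y) := by nlinarith
      have htY : t < Y := by
        by_contra hc
        push_neg at hc
        have p1 : 2 * N * Y * Y ≤ 2 * N * Y * t := mul_le_mul_of_nonneg_left hc hNY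
        have p2 : (0:ℤ) ≤ (t - Y) * (t + Y) :=
          mul_nonneg (by linarith) (by linarith)
        have p3 : (t - Y) * (t + Y) = t ^ 2 - Y ^ 2 := by ring
        have p4 : 2 * N * Y * t ≤ 8 := by linarith
        have p5 : 2 * N * (Y * Y) = 2 * N * Y * Y := by ring
        linarith
      have heq3 : (Y - N * t) ^ 2 - (N ^ 2 + 1) * t ^ 2 = 8 * (-e) := by
        linear_combination (-1 : ℤ) * heq2
      have htnat : (t.natAbs : ℤ) = t := Int.natAbs_of_nonneg (by linarith)
      refine ih t.natAbs ?_ ?_ (Y - N * t) (-e) ?_ ?_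
      · omega
      · omega
      · rcases he with rfl | rfl
        · exact Or.inr rfl
        · exact Or.inl (by norm_num)
      · rw [htnat]; exact heq3

set_option maxHeartbeats 2000000 in
theorem stmt16 (n d : ℕ) (hdn : d = n ^ 2 + 1) (hsf : Squarefree d)
    (h8 : d % 8 = 1) (hne : d ≠ 17)
    (K : Type) [Field K] [NumberField K]
    (hrank : Module.finrank ℚ K = 2)
    (hdisc : NumberField.discr K = (d : ℤ))
    (ω : NumberField.RingOfIntegers K)
    (hω : ω ^ 2 - ω = ((d - 1) / 4 : ℕ)) :
    ¬ (Ideal.span ({2, ω} : Set (NumberField.RingOfIntegers K))).IsPrincipal := by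
  intro hP
  classical
  obtain ⟨m, hdm⟩ : ∃ m, d = 4 * m + 1 := ⟨(d - 1) / 4, by omega⟩
  have hm4 : (d - 1) / 4 = m := by omega
  rw [hm4] at hω
  -- d > 2
  have hd2 : 2 < d := by
    have h := NumberField.abs_discr_gt_two (K := K) (by rw [hrank]; norm_num)
    rw [hdisc] at h
    have habs : |(d : ℤ)| = (d : ℤ) := abs_of_nonneg (by positivity)
    rw [habs] at h
    exact_mod_cast h
  have hdn' : d = n * n + 1 := by rw [hdn]; ring
  have hn4 : n % 4 = 0 := by
    have h2 : (n % 8) * (n % 8) % 8 = n * n % 8 := Nat.mul_mod n n 8 |>.symm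
    have h3 : n % 8 < 8 := Nat.mod_lt _ (by norm_num)
    set r := n % 8 with hr
    interval_cases r <;> omega
  have hn8 : 8 ≤ n := by
    rcases Nat.lt_or_ge n 8 with h | h
    · interval_cases n <;> omega
    · exact h
  -- the relation in K
  set ωK : K := (ω : K) with hωKdef
  have hω2 : ω ^ 2 = ω + (m : NumberField.RingOfIntegers K) := by
    have := sub_eq_iff_eq_add.mp hω
    rw [this]; ring
  have hωeq : ωK ^ 2 = ωK + (m : K) := by
    have h := congrArg (algebraMap (NumberField.RingOfIntegers K) K) hω2
    rw [map_add, map_pow, map_natCast] at h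
    exact h
  set μ : ℚ := (m : ℚ) with hμdef
  have hμK : ((m : K)) = algebraMap ℚ K μ := by
    rw [hμdef]; push_cast; rfl
  -- ω is irrational
  have hirr : ∀ q : ℚ, algebraMap ℚ K q ≠ ωK := by
    intro q hq
    have hq2 : q ^ 2 = q + μ := by
      have h1 : algebraMap ℚ K (q ^ 2) = algebraMap ℚ K (q + μ) := by
        rw [map_pow, map_add, hq, ← hμK, hωeq]
      exact (algebraMap ℚ K).injective h1
    have hint : IsIntegral ℤ q := by
      refine ⟨X ^ 2 - (X + C (m : ℤ)), monic_X_pow_sub ?_, ?_⟩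
      · rw [degree_X_add_C]; norm_num
      · simp only [eval₂_sub, eval₂_add, eval₂_X, eval₂_pow, eval₂_C]
        push_cast
        rw [hq2]; push_cast [hμdef]; ring
    obtain ⟨z, hz⟩ := IsIntegrallyClosed.isIntegral_iff.mp hint
    simp only [algebraMap_int_eq, eq_intCast] at hz
    have hz2 : z ^ 2 = z + (m : ℤ) := by
      have h1 : ((z : ℚ)) ^ 2 = (z : ℚ) + μ := by rw [hz]; exact hq2
      rw [hμdef] at h1; exact_mod_cast h1
    have hsq : (d : ℤ) = (2 * z - 1) * (2 * z - 1) := by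
      have : (d : ℤ) = 4 * (m : ℤ) + 1 := by exact_mod_cast congrArg (Nat.cast : ℕ → ℤ) hdm
      rw [this]; linear_combination (-4 : ℤ) * hz2
    have hsf' : Squarefree (d : ℤ) := Int.squarefree_natCast.mpr hsf
    have hu : IsUnit (2 * z - 1) := hsf' _ (by rw [← hsq])
    rcases Int.isUnit_iff.mp hu with h | h <;> rw [h] at hsq <;> omega
  -- the basis
  have hω0 : ωK ≠ 0 := by
    intro h
    exact hirr 0 (by rw [h, map_zero])
  have li : LinearIndependent ℚ ![(1 : K), ωK] := by
    rw [linearIndependent_fin2]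
    constructor
    · simpa using hω0
    · intro a ha
      simp only [Matrix.cons_val_one, Matrix.head_cons, Matrix.cons_val_zero] at ha
      have ha0 : a ≠ 0 := by rintro rfl; rw [zero_smul] at ha; exact zero_ne_one ha
      apply hirr a⁻¹
      rw [Algebra.algebraMap_eq_smul_one, ← ha, smul_smul, inv_mul_cancel₀ ha0, one_smul]
  have hcard : Fintype.card (Fin 2) = Module.finrank ℚ K := by simp [hrank]
  set b : Module.Basis (Fin 2) ℚ K := basisOfLinearIndependentOfCardEqFinrank li hcard with hbdef
  have hb : ⇑b = ![(1 : K), ωK] := coe_basisOfLinearIndependentOfCardEqFinrank li hcard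
  have hb0 : b 0 = 1 := by rw [hb]; rfl
  have hb1 : b 1 = ωK := by rw [hb]; rfl
  -- repr of explicit combinations
  have hrep : ∀ (x y : ℚ) (i : Fin 2), b.repr (x • (1 : K) + y • ωK) i = ![x, y] i := by
    intro x y i
    rw [← hb0, ← hb1, map_add, map_smul, map_smul, b.repr_self, b.repr_self]
    fin_cases i <;> simp
  -- multiplication by ω
  have hmulω : ∀ x y : ℚ, (x • (1 : K) + y • ωK) * ωK = (y * μ) • (1 : K) + (x + y) • ωK := by
    intro x y
    have h2 : ωK * ωK = μ • (1 : K) + ωK := by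
      rw [← sq, hωeq, hμK, Algebra.smul_def, mul_one]; ring
    rw [add_mul, smul_mul_assoc, smul_mul_assoc, one_mul, h2]
    module
  -- trace and norm formulas
  have htr : ∀ x y : ℚ, Algebra.trace ℚ K (x • (1 : K) + y • ωK) = 2 * x + y := by
    intro x y
    rw [Algebra.trace_eq_matrix_trace b, Matrix.trace_fin_two,
      Algebra.leftMulMatrix_eq_repr_mul, Algebra.leftMulMatrix_eq_repr_mul, hb0, hb1, mul_one,
      hmulω, hrep, hrep]
    simp; ring
  have hnm : ∀ x y : ℚ, Algebra.norm ℚ (x • (1 : K) + y • ωK) = x * (x + y) - (y * μ) * y := by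
    intro x y
    rw [Algebra.norm_eq_matrix_det b, Matrix.det_fin_two,
      Algebra.leftMulMatrix_eq_repr_mul, Algebra.leftMulMatrix_eq_repr_mul,
      Algebra.leftMulMatrix_eq_repr_mul, Algebra.leftMulMatrix_eq_repr_mul, hb0, hb1, mul_one,
      hmulω, hrep, hrep, hrep, hrep]
    simp
  -- decomposition
  have hdec : ∀ α : NumberField.RingOfIntegers K, ∃ x y : ℚ, (α : K) = x • (1 : K) + y • ωK := by
    intro α
    refine ⟨b.repr α 0, b.repr α 1, ?_⟩
    conv_lhs => rw [← b.sum_repr (α : K)]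
    rw [Fin.sum_univ_two, hb0, hb1]
  -- key: Pell-type relation
  have key : ∀ α : NumberField.RingOfIntegers K, ∃ T Y : ℤ,
      T ^ 2 - (d : ℤ) * Y ^ 2 = 4 * (Algebra.norm ℤ α) := by
    intro α
    obtain ⟨x, y, hxy⟩ := hdec α
    set T : ℤ := Algebra.trace ℤ (NumberField.RingOfIntegers K) α with hT
    have hTq : (T : ℚ) = 2 * x + y := by
      rw [hT, Algebra.coe_trace_int, hxy, htr]
    set Nv : ℤ := Algebra.norm ℤ α with hNv
    have hNq : (Nv : ℚ) = x * (x + y) - (y * μ) * y := by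
      rw [hNv, Algebra.coe_norm_int, hxy, hnm]
    have hdq : (d : ℚ) = 4 * μ + 1 := by rw [hμdef, hdm]; push_cast; ring
    have hdy : (d : ℚ) * y ^ 2 = (T : ℚ) ^ 2 - 4 * (Nv : ℚ) := by
      rw [hTq, hNq, hdq]; ring
    have hint : IsIntegral ℤ ((d : ℚ) * y) := by
      refine ⟨X ^ 2 - C ((d : ℤ) * (T ^ 2 - 4 * Nv)), monic_X_pow_sub_C _ two_ne_zero, ?_⟩
      simp only [eval₂_sub, eval₂_pow, eval₂_X, eval₂_C]
      simp only [algebraMap_int_eq, eq_intCast]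
      have hc : (((d : ℤ) * (T ^ 2 - 4 * Nv) : ℤ) : ℚ) = (d : ℚ) * ((T : ℚ) ^ 2 - 4 * (Nv : ℚ)) := by
        push_cast; ring
      rw [hc, ← hdy]; ring
    obtain ⟨Y0, hY0⟩ := IsIntegrallyClosed.isIntegral_iff.mp hint
    simp only [algebraMap_int_eq, eq_intCast] at hY0
    have hY0sq : Y0 ^ 2 = (d : ℤ) * (T ^ 2 - 4 * Nv) := by
      have h1 : ((Y0 : ℚ)) ^ 2 = (d : ℚ) * ((T : ℚ) ^ 2 - 4 * (Nv : ℚ)) := by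
        rw [hY0, ← hdy]; ring
      have h2 : ((Y0 ^ 2 : ℤ) : ℚ) = (((d : ℤ) * (T ^ 2 - 4 * Nv) : ℤ) : ℚ) := by
        push_cast
        push_cast at h1
        linarith [h1]
      exact_mod_cast h2
    have hdvd : (d : ℤ) ∣ Y0 := by
      have hsf' : Squarefree (d : ℤ) := Int.squarefree_natCast.mpr hsf
      exact (hsf'.dvd_pow_iff_dvd two_ne_zero).mp ⟨T ^ 2 - 4 * Nv, hY0sq⟩
    obtain ⟨Y, rfl⟩ := hdvd
    have hd0 : (d : ℚ) ≠ 0 := Nat.cast_ne_zero.mpr (by omega)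
    have hyY : y = (Y : ℚ) := by
      have h1 : (d : ℚ) * y = (d : ℚ) * (Y : ℚ) := by
        rw [← hY0]; push_cast; ring
      exact mul_left_cancel₀ hd0 h1
    refine ⟨T, Y, ?_⟩
    have h2 : (T : ℚ) ^ 2 - (d : ℚ) * (Y : ℚ) ^ 2 = 4 * (Nv : ℚ) := by
      rw [← hyY]; linarith [hdy]
    exact_mod_cast h2
  -- trace values
  have htr1 : Algebra.trace ℤ (NumberField.RingOfIntegers K) 1 = 2 := by
    have h1 : ((Algebra.trace ℤ (NumberField.RingOfIntegers K) 1 : ℤ) : ℚ) = 2 := by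
      rw [Algebra.coe_trace_int]
      have : ((1 : NumberField.RingOfIntegers K) : K) = algebraMap ℚ K 1 := by simp
      rw [this, Algebra.trace_algebraMap, hrank]; norm_num
    exact_mod_cast h1
  have htrω : Algebra.trace ℤ (NumberField.RingOfIntegers K) ω = 1 := by
    have h1 : ((Algebra.trace ℤ (NumberField.RingOfIntegers K) ω : ℤ) : ℚ) = 1 := by
      rw [Algebra.coe_trace_int]
      have : (ω : K) = (0 : ℚ) • (1 : K) + (1 : ℚ) • ωK := by simp; rfl
      rw [this, htr]; norm_num
    exact_mod_cast h1
  have hnorm2 : Algebra.norm ℤ (2 : NumberField.RingOfIntegers K) = 4 := by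
    have h1 : ((Algebra.norm ℤ (2 : NumberField.RingOfIntegers K) : ℤ) : ℚ) = 4 := by
      rw [Algebra.coe_norm_int]
      have : ((2 : NumberField.RingOfIntegers K) : K) = algebraMap ℚ K 2 := by
        rw [NumberField.RingOfIntegers.coe_eq_algebraMap, map_ofNat, map_ofNat]
      rw [this, Algebra.norm_algebraMap, hrank]; norm_num
    exact_mod_cast h1
  -- the principal generator
  obtain ⟨α, hα⟩ := hP
  rw [Ideal.submodule_span_eq] at hα
  have h2mem : (2 : NumberField.RingOfIntegers K) ∈ Ideal.span {α} := by
    rw [← hα]; exact Ideal.subset_span (by simp)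
  have hωmem : ω ∈ Ideal.span {α} := by
    rw [← hα]; exact Ideal.subset_span (by simp)
  obtain ⟨β, hβ⟩ := Ideal.mem_span_singleton'.mp h2mem
  obtain ⟨γ, hγ⟩ := Ideal.mem_span_singleton'.mp hωmem
  set Na : ℤ := Algebra.norm ℤ α with hNa
  set Nb : ℤ := Algebra.norm ℤ β with hNb
  have hNprod : Nb * Na = 4 := by
    rw [hNa, hNb, ← map_mul, hβ, hnorm2]
  clear_value Na Nb
  have hdvd4 : Na ∣ 4 := Dvd.intro_left Nb hNprod
  have hnadvd : Na.natAbs ∣ 4 := by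
    have h1 : Na.natAbs ∣ (4 : ℤ).natAbs := Int.natAbs_dvd_natAbs.mpr hdvd4
    exact h1
  have hcases : Na.natAbs = 1 ∨ Na.natAbs = 2 ∨ Na.natAbs = 4 := by
    have h1 : Na.natAbs ≤ 4 := Nat.le_of_dvd (by norm_num) hnadvd
    set k := Na.natAbs
    interval_cases k <;> omega
  obtain ⟨m', hm'⟩ : ∃ m', m = 2 * m' := ⟨m / 2, by omega⟩
  have hωm' : ω ^ 2 - ω = 2 * (m' : NumberField.RingOfIntegers K) := by
    rw [hω, hm']; push_cast; ring
  -- unit criterion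
  have hunit : ∀ δ : NumberField.RingOfIntegers K, (Algebra.norm ℤ δ).natAbs = 1 → IsUnit δ := by
    intro δ h1
    rw [NumberField.isUnit_iff_norm, RingOfIntegers.coe_norm, ← Algebra.coe_norm_int,
      ← Int.cast_abs]
    have h2 : |Algebra.norm ℤ δ| = 1 := by
      rw [Int.abs_eq_natAbs, h1]; rfl
    rw [h2]; norm_num
  rcases hcases with h1 | h2 | h4
  · -- α is a unit : 1 ∈ (2, ω)
    have hu : IsUnit α := hunit α (by rw [← hNa]; exact h1)
    have h1mem : (1 : NumberField.RingOfIntegers K) ∈ Ideal.span ({2, ω} :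
        Set (NumberField.RingOfIntegers K)) := by
      rw [hα, Ideal.span_singleton_eq_top.mpr hu]; trivial
    obtain ⟨u, v, huv⟩ := Ideal.mem_span_pair.mp h1mem
    have hδ : ω - 1 = (2 : ℤ) • (u * (ω - 1) + v * (m' : NumberField.RingOfIntegers K)) := by
      rw [zsmul_eq_mul]; push_cast
      linear_combination (-(ω - 1)) * huv + v * hωm'
    have htrδ := congrArg (Algebra.trace ℤ (NumberField.RingOfIntegers K)) hδ
    rw [map_sub, map_smul, htrω, htr1, smul_eq_mul] at htrδ
    omega
  · -- norm ±2 : Pell equation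
    obtain ⟨T, Y, hTY⟩ := key α
    rw [← hNa] at hTY
    have he : Na = 2 ∨ Na = -2 := by omega
    have hY0 : Y ≠ 0 := by
      rintro rfl
      have h0 : T ^ 2 = 4 * Na := by rw [← hTY]; ring
      rcases he with h | h <;> rw [h] at h0
      · exact sq_ne_eight T (by linarith)
      · linarith [sq_nonneg T]
    have hdZ : ((n : ℤ)) ^ 2 + 1 = (d : ℤ) := by
      rw [hdn]; push_cast; ring
    have hYsq : ((Y.natAbs : ℤ)) ^ 2 = Y ^ 2 := Int.natAbs_pow_two Y
    rcases he with h | h <;> rw [h] at hTY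
    · exact no_pell n hn8 Y.natAbs (Int.natAbs_pos.mpr hY0) T 1 (Or.inl rfl)
        (by rw [hdZ, hYsq]; linarith)
    · exact no_pell n hn8 Y.natAbs (Int.natAbs_pos.mpr hY0) T (-1) (Or.inr rfl)
        (by rw [hdZ, hYsq]; linarith)
  · -- α associated to 2 : ω divisible by 2
    have hNb1 : Nb.natAbs = 1 := by
      have h5 : Nb.natAbs * Na.natAbs = 4 := by
        rw [← Int.natAbs_mul, hNprod]; rfl
      rw [h4] at h5; omega
    have hbu : IsUnit β := hunit β (by rw [← hNb]; exact hNb1)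
    obtain ⟨U, hU⟩ := hbu
    have hω2δ : ω = (2 : ℤ) • (γ * ↑U⁻¹) := by
      rw [zsmul_eq_mul]
      push_cast
      calc ω = γ * α * ((U : NumberField.RingOfIntegers K) * ↑U⁻¹) := by
              rw [U.mul_inv, mul_one, hγ]
        _ = (β * α) * (γ * ↑U⁻¹) := by rw [hU]; ring
        _ = 2 * (γ * ↑U⁻¹) := by rw [hβ]
    have htrδ := congrArg (Algebra.trace ℤ (NumberField.RingOfIntegers K)) hω2δ
    rw [map_smul, htrω, smul_eq_mul] at htrδ
    omega
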